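/- Let R ≥ k ≥ 3 and r ≥ 1 be such that every r-colouring of the edges of the complete graph K_R yields a monochromatic K_k. Then for every n ≥ R² and every (r+1)-colouring of the edges of K_n, either there are more than (1/(2·binom(R,k)))·binom(n,k) copies of K_k that are monochromatic in one of the first r colours, or more than (1/R²)·binom(n,2) edges receive colour r+1. -/

import Mathlib

open Finset

lemma aux_supersets {α : Type*} [Fintype α] [DecidableEq α] {R : ℕ} (A : Finset α)
    (hR : A.card ≤ R) :
    ((Finset.powersetCard R (univ : Finset α)).filter (fun S => A ⊆ S)).card
      = (Fintype.card α - A.card).choose (R - A.card) := by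
  have hrw : (Fintype.card α - A.card).choose (R - A.card)
      = (Finset.powersetCard (R - A.card) Aᶜ).card := by
    rw [Finset.card_powersetCard, Finset.card_compl]
  rw [hrw]
  apply Finset.card_bij (fun S _ => S \ A)
  · intro S hS
    simp only [mem_filter, Finset.mem_powersetCard] at hS
    rw [Finset.mem_powersetCard]
    refine ⟨fun x hx => ?_, ?_⟩
    · simp only [Finset.mem_sdiff, Finset.mem_compl] at hx ⊢
      exact hx.2
    · rw [Finset.card_sdiff_of_subset hS.2, hS.1.2]
  · intro S hS T hT h
    simp only [mem_filter, Finset.mem_powersetCard] at hS hT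
    have : S \ A ∪ A = T \ A ∪ A := by rw [h]
    rwa [Finset.sdiff_union_of_subset hS.2, Finset.sdiff_union_of_subset hT.2] at this
  · intro T hT
    rw [Finset.mem_powersetCard] at hT
    have hdisj : Disjoint T A := by
      rw [Finset.disjoint_left]
      intro x hx hxA
      have := hT.1 hx
      simp only [Finset.mem_compl] at this
      exact this hxA
    refine ⟨T ∪ A, ?_, ?_⟩
    · simp only [mem_filter, Finset.mem_powersetCard]
      refine ⟨⟨Finset.subset_univ _, ?_⟩, Finset.subset_union_right⟩
      rw [Finset.card_union_of_disjoint hdisj, hT.2]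
      omega
    · rw [Finset.union_sdiff_right, Finset.sdiff_eq_self_of_disjoint hdisj]

set_option maxHeartbeats 1000000 in
theorem stmt_18 (R k r : ℕ) (hk : 3 ≤ k) (hkR : k ≤ R) (hr : 1 ≤ r)
    (hRam : ∀ c : Sym2 (Fin R) → Fin r, ∃ (i : Fin r) (A : Finset (Fin R)),
      A.card = k ∧ ∀ x ∈ A, ∀ y ∈ A, x ≠ y → c s(x, y) = i)
    (n : ℕ) (hn : R ^ 2 ≤ n) (χ : Sym2 (Fin n) → Fin (r + 1)) :
    ((n.choose k : ℝ) / (2 * (R.choose k : ℝ)) <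
      ({A : Finset (Fin n) | A.card = k ∧ ∃ i : Fin (r + 1), i ≠ Fin.last r ∧
        ∀ x ∈ A, ∀ y ∈ A, x ≠ y → χ s(x, y) = i}.ncard : ℝ)) ∨
    ((n.choose 2 : ℝ) / (R : ℝ) ^ 2 <
      ({e : Sym2 (Fin n) | ¬ e.IsDiag ∧ χ e = Fin.last r}.ncard : ℝ)) := by
  classical
  have hR3 : 3 ≤ R := le_trans hk hkR
  have hRn : R ≤ n := le_trans (Nat.le_self_pow two_ne_zero R) hn
  -- the finsets
  set M : Finset (Finset (Fin n)) := univ.filter (fun A => A.card = k ∧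
    ∃ i : Fin (r + 1), i ≠ Fin.last r ∧ ∀ x ∈ A, ∀ y ∈ A, x ≠ y → χ s(x, y) = i) with hM
  set E : Finset (Sym2 (Fin n)) :=
    univ.filter (fun e => ¬ e.IsDiag ∧ χ e = Fin.last r) with hEdef
  have hMset : {A : Finset (Fin n) | A.card = k ∧ ∃ i : Fin (r + 1), i ≠ Fin.last r ∧
      ∀ x ∈ A, ∀ y ∈ A, x ≠ y → χ s(x, y) = i} = ↑M := by
    ext A; simp [hM]
  have hEset : {e : Sym2 (Fin n) | ¬ e.IsDiag ∧ χ e = Fin.last r} = ↑E := by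
    ext e; simp [hEdef]
  rw [hMset, hEset, Set.ncard_coe_finset, Set.ncard_coe_finset]
  rw [or_iff_not_imp_right]
  intro hE'
  push_neg at hE'
  -- good/bad R-sets
  set GoodP : Finset (Fin n) → Prop :=
    fun S => ∀ x ∈ S, ∀ y ∈ S, x ≠ y → χ s(x, y) ≠ Fin.last r with hGoodP
  set Good : Finset (Finset (Fin n)) :=
    (Finset.powersetCard R (univ : Finset (Fin n))).filter GoodP with hGoodDef
  set Bad : Finset (Finset (Fin n)) :=
    (Finset.powersetCard R (univ : Finset (Fin n))).filter (fun S => ¬ GoodP S) with hBadDef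
  have hSplit : Good.card + Bad.card = n.choose R := by
    rw [hGoodDef, hBadDef, Finset.card_filter_add_card_filter_not,
      Finset.card_powersetCard, Finset.card_univ, Fintype.card_fin]
  -- each good set contains a monochromatic k-set
  have hGoodMono : ∀ S ∈ Good, ∃ A ∈ M, A ⊆ S := by
    intro S hS
    rw [hGoodDef, mem_filter, Finset.mem_powersetCard] at hS
    obtain ⟨⟨-, hScard⟩, hSgood⟩ := hS
    set f := S.orderEmbOfFin hScard with hf
    have hfmem : ∀ x : Fin R, f x ∈ S := fun x => S.orderEmbOfFin_mem hScard x
    have hfinj : Function.Injective f := f.injective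
    obtain ⟨i, B, hBcard, hBmono⟩ := hRam (fun e =>
      if h : χ (Sym2.map f e) = Fin.last r then ⟨0, hr⟩
      else (χ (Sym2.map f e)).castPred h)
    refine ⟨B.image f, ?_, fun u hu => ?_⟩
    · rw [hM, mem_filter]
      refine ⟨mem_univ _, Finset.card_image_of_injective _ hfinj ▸ hBcard, i.castSucc,
        Fin.ne_last_of_lt (Fin.castSucc_lt_last i), ?_⟩
      intro u hu v hv huv
      obtain ⟨x, hx, rfl⟩ := Finset.mem_image.mp hu
      obtain ⟨y, hy, rfl⟩ := Finset.mem_image.mp hv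
      have hxy : x ≠ y := fun h => huv (by rw [h])
      have hth := hBmono x hx y hy hxy
      simp only [Sym2.map_pair_eq] at hth
      have hne : χ s(f x, f y) ≠ Fin.last r :=
        hSgood (f x) (hfmem x) (f y) (hfmem y) huv
      rw [dif_neg hne] at hth
      rw [← hth, Fin.castSucc_castPred]
    · obtain ⟨x, -, rfl⟩ := Finset.mem_image.mp hu
      exact hfmem x
  -- each bad set contains a last-coloured edge
  have hBadEdge : ∀ S ∈ Bad, ∃ e ∈ E, ∀ v ∈ e, v ∈ S := by
    intro S hS
    rw [hBadDef, mem_filter] at hS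
    obtain ⟨-, hSbad⟩ := hS
    simp only [hGoodP] at hSbad
    push_neg at hSbad
    obtain ⟨x, hx, y, hy, hxy, hc⟩ := hSbad
    refine ⟨s(x, y), ?_, ?_⟩
    · rw [hEdef, mem_filter]
      exact ⟨mem_univ _, by rwa [Sym2.isDiag_iff_proj_eq], hc⟩
    · intro v hv
      rw [Sym2.mem_iff] at hv
      rcases hv with rfl | rfl
      exacts [hx, hy]
  -- double counting for Good vs M
  have hGM : Good.card * 1 ≤ M.card * (n - k).choose (R - k) := by
    apply Finset.card_mul_le_card_mul (fun S A => A ⊆ S)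
    · intro S hS
      obtain ⟨A, hA, hAS⟩ := hGoodMono S hS
      exact Finset.card_pos.mpr ⟨A, (Finset.mem_bipartiteAbove _).mpr ⟨hA, hAS⟩⟩
    · intro A hA
      have hAcard : A.card = k := by
        rw [hM, mem_filter] at hA; exact hA.2.1
      have hsub : Good.bipartiteBelow (fun S A => A ⊆ S) A ⊆
          (Finset.powersetCard R (univ : Finset (Fin n))).filter (fun S => A ⊆ S) := by
        intro S hS
        rw [Finset.mem_bipartiteBelow] at hS
        rw [mem_filter]
        exact ⟨Finset.filter_subset _ _ hS.1, hS.2⟩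
      calc (Good.bipartiteBelow (fun S A => A ⊆ S) A).card
          ≤ _ := Finset.card_le_card hsub
        _ = (n - k).choose (R - k) := by
            rw [aux_supersets A (hAcard ▸ hkR), hAcard, Fintype.card_fin]
  -- double counting for Bad vs E
  have hBE : Bad.card * 1 ≤ E.card * (n - 2).choose (R - 2) := by
    apply Finset.card_mul_le_card_mul (fun S e => ∀ v ∈ e, v ∈ S)
    · intro S hS
      obtain ⟨e, he, hvS⟩ := hBadEdge S hS
      exact Finset.card_pos.mpr ⟨e, (Finset.mem_bipartiteAbove _).mpr ⟨he, hvS⟩⟩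
    · intro e he
      induction e using Sym2.ind with
      | _ x y =>
        have hxy : x ≠ y := by
          rw [hEdef, mem_filter, Sym2.isDiag_iff_proj_eq] at he
          exact he.2.1
        have hsub : Bad.bipartiteBelow (fun S e => ∀ v ∈ e, v ∈ S) s(x, y) ⊆
            (Finset.powersetCard R (univ : Finset (Fin n))).filter
              (fun S => ({x, y} : Finset (Fin n)) ⊆ S) := by
          intro S hS
          rw [Finset.mem_bipartiteBelow] at hS
          rw [mem_filter]
          refine ⟨Finset.filter_subset _ _ hS.1, ?_⟩
          intro v hv
          simp only [Finset.mem_insert, Finset.mem_singleton] at hv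
          apply hS.2
          rw [Sym2.mem_iff]
          exact hv
        have hcard2 : ({x, y} : Finset (Fin n)).card = 2 := Finset.card_pair hxy
        calc (Bad.bipartiteBelow (fun S e => ∀ v ∈ e, v ∈ S) s(x, y)).card
            ≤ _ := Finset.card_le_card hsub
          _ = (n - 2).choose (R - 2) := by
              rw [aux_supersets _ (hcard2 ▸ (by omega : ({x, y} : Finset (Fin n)).card ≤ R)),
                hcard2, Fintype.card_fin]
  -- numerical part
  rw [mul_one] at hGM hBE
  have hck : 0 < (n - k).choose (R - k) := Nat.choose_pos (by omega)
  have hchnk : 0 < n.choose k := Nat.choose_pos (by omega)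
  have hchRk : 0 < R.choose k := Nat.choose_pos hkR
  have hid2 : n.choose R * R.choose 2 = n.choose 2 * (n - 2).choose (R - 2) :=
    Nat.choose_mul (by omega)
  have hidk : n.choose R * R.choose k = n.choose k * (n - k).choose (R - k) :=
    Nat.choose_mul hkR
  have hchR2 : R.choose 2 * 2 = R * (R - 1) := by
    have h := Nat.add_one_mul_choose_eq (R - 1) 1
    simp only [Nat.succ_eq_add_one, Nat.choose_one_right,
      (show R - 1 + 1 = R by omega)] at h
    exact h.symm
  -- move to the reals
  have f1 : (Good.card : ℝ) ≤ (M.card : ℝ) * ((n - k).choose (R - k) : ℝ) := by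
    exact_mod_cast hGM
  have f2 : (Bad.card : ℝ) ≤ (E.card : ℝ) * ((n - 2).choose (R - 2) : ℝ) := by
    exact_mod_cast hBE
  have f3 : (Good.card : ℝ) + (Bad.card : ℝ) = (n.choose R : ℝ) := by
    exact_mod_cast hSplit
  have f5 : (n.choose R : ℝ) * (R.choose 2 : ℝ)
      = (n.choose 2 : ℝ) * ((n - 2).choose (R - 2) : ℝ) := by exact_mod_cast hid2
  have f6 : (n.choose R : ℝ) * (R.choose k : ℝ)
      = (n.choose k : ℝ) * ((n - k).choose (R - k) : ℝ) := by exact_mod_cast hidk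
  have f7 : (R.choose 2 : ℝ) * 2 = (R : ℝ) * ((R : ℝ) - 1) := by
    have h1 : ((R.choose 2 * 2 : ℕ) : ℝ) = ((R * (R - 1) : ℕ) : ℝ) := by rw [hchR2]
    push_cast [Nat.cast_sub (show 1 ≤ R by omega)] at h1
    exact h1
  have hRpos : (0 : ℝ) < R := by positivity
  have hR2pos : (0 : ℝ) < (R : ℝ) ^ 2 := by positivity
  have hckpos : (0 : ℝ) < ((n - k).choose (R - k) : ℝ) := by exact_mod_cast hck
  have hchnkpos : (0 : ℝ) < (n.choose k : ℝ) := by exact_mod_cast hchnk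
  have hchRkpos : (0 : ℝ) < (R.choose k : ℝ) := by exact_mod_cast hchRk
  have hc2nn : (0 : ℝ) ≤ ((n - 2).choose (R - 2) : ℝ) := by positivity
  have hEcR2 : (E.card : ℝ) * (R : ℝ) ^ 2 ≤ (n.choose 2 : ℝ) := (le_div_iff₀ hR2pos).mp hE'
  have s1 : (E.card : ℝ) * (R : ℝ) ^ 2 * ((n - 2).choose (R - 2) : ℝ)
      ≤ (n.choose R : ℝ) * (R.choose 2 : ℝ) := by
    rw [f5]; exact mul_le_mul_of_nonneg_right hEcR2 hc2nn
  have s2 : (Bad.card : ℝ) * (R : ℝ) ^ 2 ≤ (n.choose R : ℝ) * (R.choose 2 : ℝ) := by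
    have h := mul_le_mul_of_nonneg_right f2 (le_of_lt hR2pos)
    linarith [h, s1]
  have s3 : (n.choose R : ℝ) * ((R : ℝ) ^ 2 + (R : ℝ))
      ≤ (M.card : ℝ) * ((n - k).choose (R - k) : ℝ) * (R : ℝ) ^ 2 * 2 := by
    have hf1 := mul_le_mul_of_nonneg_right f1 (le_of_lt hR2pos)
    have hf3R : ((Good.card : ℝ) + (Bad.card : ℝ)) * (R : ℝ) ^ 2
        = (n.choose R : ℝ) * (R : ℝ) ^ 2 := by rw [f3]
    have h7N : (n.choose R : ℝ) * ((R.choose 2 : ℝ) * 2)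
        = (n.choose R : ℝ) * ((R : ℝ) * ((R : ℝ) - 1)) := by rw [f7]
    nlinarith [hf1, s2, hf3R, h7N]
  have s4 := mul_le_mul_of_nonneg_right s3 (le_of_lt hchRkpos)
  have f6' : (n.choose R : ℝ) * (R.choose k : ℝ) * ((R : ℝ) ^ 2 + (R : ℝ))
      = (n.choose k : ℝ) * ((n - k).choose (R - k) : ℝ) * ((R : ℝ) ^ 2 + (R : ℝ)) := by
    rw [f6]
  have hp : (0 : ℝ) < (n.choose k : ℝ) * ((n - k).choose (R - k) : ℝ) * (R : ℝ) := by
    positivity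
  have s7 : (n.choose k : ℝ) * (((n - k).choose (R - k) : ℝ) * (R : ℝ) ^ 2)
      < (M.card : ℝ) * (2 * (R.choose k : ℝ)) * (((n - k).choose (R - k) : ℝ) * (R : ℝ) ^ 2) := by
    nlinarith [s4, f6', hp]

  have hfin : (n.choose k : ℝ) < (M.card : ℝ) * (2 * (R.choose k : ℝ)) :=
    lt_of_mul_lt_mul_right s7 (by positivity)
  rw [div_lt_iff₀ (by positivity)]
  exact hfin
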